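/- Dually, if f : D → C admits a fully faithful right adjoint, then the pullback projection q : D ×_C E → E admits a fully faithful right adjoint, for any functor g : E → C. -/

import Mathlib

open CategoryTheory

universe v₁ v₂ v₃ u₁ u₂ u₃

variable {C : Type u₁} [Category.{v₁} C] {D : Type u₂} [Category.{v₂} D]
  {E : Type u₃} [Category.{v₃} E]

/-- The (iso-comma) pullback `D ×_C E` of a cospan of categories `f : D ⥤ C ⟵ E : g`. -/
structure CatPullback (f : D ⥤ C) (g : E ⥤ C) where
  left : D
  right : E
  iso : f.obj left ≅ g.obj right

/-- Morphisms in the pullback of categories. -/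
@[ext]
structure CatPullbackHom {f : D ⥤ C} {g : E ⥤ C} (X Y : CatPullback f g) where
  l : X.left ⟶ Y.left
  r : X.right ⟶ Y.right
  w : f.map l ≫ Y.iso.hom = X.iso.hom ≫ g.map r

instance (f : D ⥤ C) (g : E ⥤ C) : Category (CatPullback f g) where
  Hom X Y := CatPullbackHom X Y
  id X := ⟨𝟙 _, 𝟙 _, by simp⟩
  comp {X Y Z} φ ψ := ⟨φ.l ≫ ψ.l, φ.r ≫ ψ.r, by
    rw [Functor.map_comp, Functor.map_comp, Category.assoc, ψ.w, ← Category.assoc, φ.w,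
      Category.assoc]⟩
  id_comp φ := by apply CatPullbackHom.ext <;> simp
  comp_id φ := by apply CatPullbackHom.ext <;> simp
  assoc φ ψ χ := by apply CatPullbackHom.ext <;> simp

/-- The projection `D ×_C E ⥤ E`. -/
def catPullbackSnd (f : D ⥤ C) (g : E ⥤ C) : CatPullback f g ⥤ E where
  obj X := X.right
  map φ := φ.r

@[simp] lemma CatPullback.id_l {f : D ⥤ C} {g : E ⥤ C} (X : CatPullback f g) :
    (𝟙 X : CatPullbackHom X X).l = 𝟙 X.left := rfl

@[simp] lemma CatPullback.id_r {f : D ⥤ C} {g : E ⥤ C} (X : CatPullback f g) :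
    (𝟙 X : CatPullbackHom X X).r = 𝟙 X.right := rfl

@[simp] lemma CatPullback.comp_l {f : D ⥤ C} {g : E ⥤ C} {X Y Z : CatPullback f g}
    (φ : X ⟶ Y) (ψ : Y ⟶ Z) : (φ ≫ ψ).l = φ.l ≫ ψ.l := rfl

@[simp] lemma CatPullback.comp_r {f : D ⥤ C} {g : E ⥤ C} {X Y Z : CatPullback f g}
    (φ : X ⟶ Y) (ψ : Y ⟶ Z) : (φ ≫ ψ).r = φ.r ≫ ψ.r := rfl

/-- If `f : D ⥤ C` admits a fully faithful right adjoint, then so does the pullback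
projection `q : D ×_C E ⥤ E`, for any `g : E ⥤ C`: left Bousfield localizations are
closed under pullback. -/
theorem catPullback_leftBousfield (f : D ⥤ C) (g : E ⥤ C)
    (f' : C ⥤ D) (adj : f ⊣ f') (hfull : f'.Full) (hfaithful : f'.Faithful) :
    ∃ h : E ⥤ CatPullback f g,
      Nonempty (catPullbackSnd f g ⊣ h) ∧ h.Full ∧ h.Faithful := by
  haveI := hfull; haveI := hfaithful
  haveI : IsIso adj.counit := adj.counit_isIso_of_R_fully_faithful
  let h : E ⥤ CatPullback f g :=
    { obj := fun e => ⟨f'.obj (g.obj e), e, asIso (adj.counit.app (g.obj e))⟩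
      map := fun {e e'} φ => ⟨f'.map (g.map φ), φ, by simp⟩
      map_id := fun e => by apply CatPullbackHom.ext <;> simp
      map_comp := fun φ ψ => by apply CatPullbackHom.ext <;> simp }
  refine ⟨h, ⟨Adjunction.mkOfHomEquiv
    { homEquiv := fun X e =>
        { toFun := fun r => ⟨(adj.homEquiv _ _) (X.iso.hom ≫ g.map r), r, by
            dsimp only [h, asIso_hom]
            rw [← adj.homEquiv_counit, Equiv.symm_apply_apply]⟩
          invFun := fun φ => φ.r
          left_inv := fun r => rfl
          right_inv := fun φ => by
            apply CatPullbackHom.ext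
            · exact ((adj.homEquiv _ _).symm_apply_eq.mp
                (by simpa [Adjunction.homEquiv_counit, h] using φ.w)).symm
            · rfl }
      homEquiv_naturality_left_symm := fun φ r => rfl
      homEquiv_naturality_right := fun {X e e'} r ψ => by
        apply CatPullbackHom.ext
        · simp [h, Adjunction.homEquiv_unit]
          show adj.unit.app X.left ≫ f'.map X.iso.hom ≫ f'.map (g.map (r ≫ ψ)) = (adj.unit.app X.left ≫ f'.map X.iso.hom ≫ f'.map (g.map r)) ≫ f'.map (g.map ψ)
          simp only [Category.assoc]
          exact congrArg _ (congrArg _ ((congrArg f'.map (g.map_comp r ψ)).trans (f'.map_comp _ _)))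
        · rfl }⟩, ?_, ?_⟩
  · refine ⟨fun {e e'} ψ => ⟨ψ.r, ?_⟩⟩
    apply CatPullbackHom.ext
    · apply (adj.homEquiv _ _).symm.injective
      simp only [Adjunction.homEquiv_counit]
      have := ψ.w
      simp [h] at this ⊢
      exact this.symm
    · rfl
  · exact ⟨fun {e e'} φ ψ hφψ => congrArg CatPullbackHom.r hφψ⟩
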